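/- Let G be a finite directed graph and i a vertex. Suppose id : V → L is a labeling such that any two distinct ancestors of i with the same label are mutually unreachable. Form the quotient graph G_i of the subgraph induced by i and its ancestors by merging vertices with equal labels. Then for any ancestor j of i: j's label is reachable from i's label in G_i if and only if j is reachable from i in the induced subgraph. -/

import Mathlib

/-- Let `G` be a finite directed graph, `i` a vertex, and `id : V → L` a labeling such
that any two distinct ancestors of `i` (vertices reaching `i`, including `i` itself) with
the same label are mutually unreachable.  Form the quotient graph `G_i` of the subgraph
induced by `i` and its ancestors by merging vertices with equal labels.  Then for any
ancestor `j` of `i`: `id j` is reachable from `id i` in `G_i` iff `j` is reachable from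
`i` in the induced subgraph. -/
theorem stmt9 {V L : Type*} [Fintype V] (E : V → V → Prop) (i : V) (idf : V → L)
    -- ancestors of `i` (including `i` itself)
    (Anc : V → Prop) (hAnc : ∀ u, Anc u ↔ Relation.ReflTransGen E u i)
    (hlabel : ∀ u v, Anc u → Anc v → u ≠ v → idf u = idf v →
      ¬ Relation.ReflTransGen E u v ∧ ¬ Relation.ReflTransGen E v u)
    -- edge relation of the subgraph induced by `i` and its ancestors
    (Esub : V → V → Prop) (hEsub : ∀ u v, Esub u v ↔ Anc u ∧ Anc v ∧ E u v)
    -- edge relation of the quotient graph `G_i` on labels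
    (EQ : L → L → Prop)
    (hEQ : ∀ a b, EQ a b ↔ ∃ u v, Esub u v ∧ idf u = a ∧ idf v = b) :
    ∀ j : V, Anc j →
      (Relation.ReflTransGen EQ (idf i) (idf j) ↔ Relation.ReflTransGen Esub i j) := by
  intro j hj
  have hsubE : ∀ {a b : V}, Relation.ReflTransGen Esub a b → Relation.ReflTransGen E a b :=
    fun h => Relation.ReflTransGen.mono (fun x y hxy => ((hEsub x y).1 hxy).2.2) _ _ h
  constructor
  · intro h
    have key : ∀ b, Relation.ReflTransGen EQ (idf i) b →
        ∃ w, Anc w ∧ idf w = b ∧ Relation.ReflTransGen Esub i w := by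
      intro b hb
      induction hb with
      | refl => exact ⟨i, (hAnc i).2 .refl, rfl, .refl⟩
      | tail hab hbc ih =>
        obtain ⟨w, hw, hwb, hiw⟩ := ih
        obtain ⟨u, v, huv, hu, hv⟩ := (hEQ _ _).1 hbc
        have hAu : Anc u := ((hEsub u v).1 huv).1
        have hAv : Anc v := ((hEsub u v).1 huv).2.1
        have huw : u = w := by
          by_contra hne
          exact (hlabel u w hAu hw hne (hu.trans hwb.symm)).1
            (((hAnc u).1 hAu).trans (hsubE hiw))
        subst huw
        exact ⟨v, hAv, hv, hiw.tail huv⟩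
    obtain ⟨w, hw, hwj, hiw⟩ := key _ h
    by_cases hwj' : w = j
    · exact hwj' ▸ hiw
    · exact absurd (((hAnc j).1 hj).trans (hsubE hiw))
        (hlabel j w hj hw (Ne.symm hwj') hwj.symm).1
  · intro h
    clear hj
    induction h with
    | refl => exact .refl
    | tail _ hbc ih => exact ih.tail ((hEQ _ _).2 ⟨_, _, hbc, rfl, rfl⟩)
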